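/- Let n, k, ℓ be integers with k ≥ 8, n ≥ k, and ℓ ≥ k²·log n. Then there exists a uniform (n,k,ℓ)-splitter of size at most ⌈k²·log n / log ℓ⌉. -/

import Mathlib

open Finset

/-- The number of elements of `[n]` mapped to `i` by `f`. -/
def preimCard {n ℓ : ℕ} (f : Fin n → Fin ℓ) (i : Fin ℓ) : ℕ :=
  (Finset.univ.filter fun x => f x = i).card

/-- The size of the image of `f`. -/
def imageSize {n ℓ : ℕ} (f : Fin n → Fin ℓ) : ℕ :=
  (Finset.univ.image f).card

/-- An `(n,k,ℓ)`-splitter: for every `k`-subset `S` of `[n]` some `f` in the family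
splits `S` as evenly as possible into the `ℓ` parts `f⁻¹(i) ∩ S`. -/
def IsSplitter (n k ℓ : ℕ) (F : Finset (Fin n → Fin ℓ)) : Prop :=
  ∀ S : Finset (Fin n), S.card = k → ∃ f ∈ F, ∀ i : Fin ℓ,
    k / ℓ ≤ (S.filter fun x => f x = i).card ∧
      (S.filter fun x => f x = i).card ≤ (k + ℓ - 1) / ℓ

/-- A uniform family: each `f` has all preimages of elements of its image of size
`⌊n/|Im f|⌋` or `⌈n/|Im f|⌉`. -/
def IsUniformFamily (n ℓ : ℕ) (F : Finset (Fin n → Fin ℓ)) : Prop :=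
  ∀ f ∈ F, ∀ i ∈ Finset.univ.image f,
    n / imageSize f ≤ preimCard f i ∧
      preimCard f i ≤ (n + imageSize f - 1) / imageSize f

/-- An `a`-uniform family: preimage sizes deviate by at most `a` from
`⌊n/|Im f|⌋`/`⌈n/|Im f|⌉`, and any two preimage sizes differ by at most `a`. -/
def IsAUniformFamily (n ℓ a : ℕ) (F : Finset (Fin n → Fin ℓ)) : Prop :=
  ∀ f ∈ F,
    (∀ i ∈ Finset.univ.image f,
      n / imageSize f - a ≤ preimCard f i ∧
        preimCard f i ≤ (n + imageSize f - 1) / imageSize f + a) ∧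
    (∀ i ∈ Finset.univ.image f, ∀ j ∈ Finset.univ.image f,
      |(preimCard f i : ℤ) - (preimCard f j : ℤ)| ≤ (a : ℤ))

/-- A strongly uniform family: for each `f` and every `i ∈ [ℓ]`,
`⌊n/ℓ⌋ ≤ |f⁻¹(i)| ≤ ⌈n/ℓ⌉`. -/
def IsStronglyUniformFamily (n ℓ : ℕ) (F : Finset (Fin n → Fin ℓ)) : Prop :=
  ∀ f ∈ F, ∀ i : Fin ℓ, n / ℓ ≤ preimCard f i ∧ preimCard f i ≤ (n + ℓ - 1) / ℓ

section SplitterAux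

private lemma sq_le_two_pow {k : ℕ} (hk : 4 ≤ k) : k ^ 2 ≤ 2 ^ k := by
  induction k with
  | zero => omega
  | succ m ih =>
    rcases Nat.lt_or_ge m 4 with h | h
    · have hm : m = 3 := by omega
      subst hm; norm_num
    · have h2 := ih h
      have h3 : (m + 1) ^ 2 ≤ 2 * m ^ 2 := by nlinarith
      calc (m + 1) ^ 2 ≤ 2 * m ^ 2 := h3
        _ ≤ 2 * 2 ^ m := by omega
        _ = 2 ^ (m + 1) := by ring

private lemma filter_mod_card {n ℓ : ℕ} (hℓ : 0 < ℓ) (hℓn : ℓ ≤ n) {i : ℕ} (hi : i < ℓ) :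
    ((Finset.range n).filter (fun x => x % ℓ = i)).card = (n - i - 1) / ℓ + 1 := by
  have hinj : Function.Injective (fun j => i + ℓ * j) := by
    intro a b hab
    simp only at hab
    exact Nat.eq_of_mul_eq_mul_left hℓ (by omega)
  have hset : (Finset.range n).filter (fun x => x % ℓ = i)
      = (Finset.range ((n - i - 1) / ℓ + 1)).image (fun j => i + ℓ * j) := by
    ext x
    simp only [mem_filter, mem_range, mem_image]
    constructor
    · rintro ⟨hx, hxm⟩
      refine ⟨x / ℓ, ?_, ?_⟩
      · have e : x % ℓ + ℓ * (x / ℓ) = x := Nat.mod_add_div x ℓ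
        have e' : x / ℓ * ℓ = x - i := by rw [Nat.mul_comm]; omega
        have : x / ℓ ≤ (n - i - 1) / ℓ := by
          rw [Nat.le_div_iff_mul_le hℓ, e']
          omega
        omega
      · have e : x % ℓ + ℓ * (x / ℓ) = x := Nat.mod_add_div x ℓ
        omega
    · rintro ⟨j, hj, rfl⟩
      have hj' : j ≤ (n - i - 1) / ℓ := by omega
      have h1 : j * ℓ ≤ n - i - 1 := (Nat.le_div_iff_mul_le hℓ).mp hj'
      have h2 : ℓ * j = j * ℓ := Nat.mul_comm _ _
      constructor
      · omega
      · rw [Nat.add_mul_mod_self_left]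
        exact Nat.mod_eq_of_lt hi
  rw [hset, Finset.card_image_of_injective _ hinj, Finset.card_range]

private lemma mod_count_bounds {n ℓ : ℕ} (hℓ : 0 < ℓ) (hℓn : ℓ ≤ n) {i : ℕ} (hi : i < ℓ) :
    n / ℓ ≤ (n - i - 1) / ℓ + 1 ∧ (n - i - 1) / ℓ + 1 ≤ (n + ℓ - 1) / ℓ := by
  constructor
  · have : (n - i - 1) / ℓ + 1 = (n - i - 1 + ℓ) / ℓ := (Nat.add_div_right _ hℓ).symm
    rw [this]
    exact Nat.div_le_div_right (by omega)
  · have h1 : (n + ℓ - 1) / ℓ = (n - 1 + ℓ) / ℓ := by congr 1; omega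
    rw [h1, Nat.add_div_right _ hℓ]
    exact Nat.add_le_add_right (Nat.div_le_div_right (by omega)) 1

private lemma card_filter_fin_val {n : ℕ} (q : ℕ → Prop) [DecidablePred q] :
    ((Finset.univ : Finset (Fin n)).filter fun x => q x.1).card
      = ((Finset.range n).filter q).card := by
  apply Finset.card_bij (fun (x : Fin n) _ => (x : ℕ))
  · intro a ha
    exact Finset.mem_filter.mpr ⟨Finset.mem_range.mpr a.2, (Finset.mem_filter.mp ha).2⟩
  · intro a _ b _ h
    exact Fin.val_injective h
  · intro b hb
    obtain ⟨hb1, hb2⟩ := Finset.mem_filter.mp hb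
    exact ⟨⟨b, Finset.mem_range.mp hb1⟩, Finset.mem_filter.mpr ⟨Finset.mem_univ _, hb2⟩, rfl⟩

private lemma card_two_point {n : ℕ} {x y a b a' b' : Fin n} (hab : a ≠ b) (hab' : a' ≠ b') :
    ((Finset.univ : Finset (Equiv.Perm (Fin n))).filter fun σ => σ x = a ∧ σ y = b).card
      = ((Finset.univ : Finset (Equiv.Perm (Fin n))).filter fun σ => σ x = a' ∧ σ y = b').card := by
  set s1 : Equiv.Perm (Fin n) := Equiv.swap a a' with hs1
  set π : Equiv.Perm (Fin n) := (Equiv.swap (s1 b) b') * s1 with hπ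
  have hπa : π a = a' := by
    have h1 : s1 a = a' := Equiv.swap_apply_left a a'
    have h2 : a' ≠ s1 b := by
      intro h
      have : s1 a' = s1 (s1 b) := by rw [h]
      rw [Equiv.swap_apply_right, Equiv.swap_apply_self] at this
      exact hab this
    show (Equiv.swap (s1 b) b') (s1 a) = a'
    rw [h1, Equiv.swap_apply_of_ne_of_ne h2 hab']
  have hπb : π b = b' := by
    show (Equiv.swap (s1 b) b') (s1 b) = b'
    exact Equiv.swap_apply_left _ _
  apply Finset.card_bij' (fun σ _ => π * σ) (fun τ _ => π⁻¹ * τ)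
  · intro σ hσ
    obtain ⟨-, h1, h2⟩ := Finset.mem_filter.mp hσ
    refine Finset.mem_filter.mpr ⟨Finset.mem_univ _, ?_, ?_⟩
    · rw [Equiv.Perm.mul_apply, h1, hπa]
    · rw [Equiv.Perm.mul_apply, h2, hπb]
  · intro τ hτ
    obtain ⟨-, h1, h2⟩ := Finset.mem_filter.mp hτ
    refine Finset.mem_filter.mpr ⟨Finset.mem_univ _, ?_, ?_⟩
    · rw [Equiv.Perm.mul_apply, h1, ← hπa, ← Equiv.Perm.mul_apply, inv_mul_cancel, Equiv.Perm.one_apply]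
    · rw [Equiv.Perm.mul_apply, h2, ← hπb, ← Equiv.Perm.mul_apply, inv_mul_cancel, Equiv.Perm.one_apply]
  · intro σ _; simp [mul_assoc]
  · intro τ _; simp [← mul_assoc]

private lemma perm_fiber_count {n : ℕ} {x y : Fin n} (hxy : x ≠ y)
    (T : Finset (Fin n × Fin n)) (hT : T ⊆ (Finset.univ : Finset (Fin n)).offDiag) :
    ((Finset.univ : Finset (Equiv.Perm (Fin n))).filter fun σ => (σ x, σ y) ∈ T).card
      = T.card *
        ((Finset.univ : Finset (Equiv.Perm (Fin n))).filter fun σ => σ x = x ∧ σ y = y).card := by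
  classical
  rw [Finset.card_eq_sum_card_fiberwise
    (f := fun σ : Equiv.Perm (Fin n) => (σ x, σ y)) (t := T)
    (s := (Finset.univ : Finset (Equiv.Perm (Fin n))).filter fun σ => (σ x, σ y) ∈ T)
    (fun σ hσ => (Finset.mem_filter.mp hσ).2)]
  rw [Finset.sum_congr rfl (fun p hp => ?_), Finset.sum_const, smul_eq_mul]
  have hp' : p.1 ≠ p.2 := (Finset.mem_offDiag.mp (hT hp)).2.2
  have hset : ((Finset.univ : Finset (Equiv.Perm (Fin n))).filter fun σ => (σ x, σ y) ∈ T).filter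
      (fun σ => (σ x, σ y) = p)
      = (Finset.univ : Finset (Equiv.Perm (Fin n))).filter fun σ => σ x = p.1 ∧ σ y = p.2 := by
    ext σ
    simp only [Finset.mem_filter, Finset.mem_univ, true_and, Prod.ext_iff]
    constructor
    · rintro ⟨-, h1, h2⟩; exact ⟨h1, h2⟩
    · rintro ⟨h1, h2⟩
      refine ⟨?_, h1, h2⟩
      have : (σ x, σ y) = p := Prod.ext h1 h2
      rw [this]; exact hp
  rw [hset]
  exact card_two_point hp' hxy

private lemma collision_bound {n ℓ : ℕ} (c : Fin n → Fin ℓ)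
    (hs : ∀ i : Fin ℓ, (((Finset.univ : Finset (Fin n)).filter fun x => c x = i).card - 1) * ℓ ≤ n - 1)
    {x y : Fin n} (hxy : x ≠ y) :
    ((Finset.univ : Finset (Equiv.Perm (Fin n))).filter fun σ => c (σ x) = c (σ y)).card * ℓ
      ≤ Fintype.card (Equiv.Perm (Fin n)) := by
  classical
  set N₀ := ((Finset.univ : Finset (Equiv.Perm (Fin n))).filter fun σ => σ x = x ∧ σ y = y).card with hN₀
  set T : Finset (Fin n × Fin n) :=
    (Finset.univ : Finset (Fin n)).offDiag.filter (fun p => c p.1 = c p.2) with hTdef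
  -- total count
  have htot : Fintype.card (Equiv.Perm (Fin n)) = (n * n - n) * N₀ := by
    have h1 : ((Finset.univ : Finset (Equiv.Perm (Fin n))).filter
        fun σ => (σ x, σ y) ∈ (Finset.univ : Finset (Fin n)).offDiag).card
        = ((Finset.univ : Finset (Fin n)).offDiag).card * N₀ :=
      perm_fiber_count hxy _ (Finset.Subset.refl _)
    have h2 : ((Finset.univ : Finset (Equiv.Perm (Fin n))).filter
        fun σ => (σ x, σ y) ∈ (Finset.univ : Finset (Fin n)).offDiag)
        = (Finset.univ : Finset (Equiv.Perm (Fin n))) := by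
      apply Finset.filter_true_of_mem
      intro σ _
      exact Finset.mem_offDiag.mpr ⟨Finset.mem_univ _, Finset.mem_univ _,
        fun h => hxy (σ.injective h)⟩
    rw [h2] at h1
    rw [← Finset.card_univ, h1, Finset.offDiag_card, Finset.card_univ, Fintype.card_fin]
  -- collision count
  have hcol : ((Finset.univ : Finset (Equiv.Perm (Fin n))).filter
      fun σ => c (σ x) = c (σ y)).card = T.card * N₀ := by
    have h2 : ((Finset.univ : Finset (Equiv.Perm (Fin n))).filter fun σ => (σ x, σ y) ∈ T)
        = ((Finset.univ : Finset (Equiv.Perm (Fin n))).filter fun σ => c (σ x) = c (σ y)) := by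
      ext σ
      simp only [hTdef, Finset.mem_filter, Finset.mem_univ, true_and, Finset.mem_offDiag]
      constructor
      · rintro ⟨-, h⟩; exact h
      · intro h
        exact ⟨fun hh => hxy (σ.injective hh), h⟩
    rw [← h2]
    exact perm_fiber_count hxy T (Finset.filter_subset _ _)
  -- the bound T.card * ℓ ≤ n * n - n
  have hT : T.card * ℓ ≤ n * n - n := by
    have hD : T.card = ∑ i : Fin ℓ,
        (((Finset.univ : Finset (Fin n)).filter fun a => c a = i).card *
          ((Finset.univ : Finset (Fin n)).filter fun a => c a = i).card
          - ((Finset.univ : Finset (Fin n)).filter fun a => c a = i).card) := by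
      rw [Finset.card_eq_sum_card_fiberwise
        (f := fun p : Fin n × Fin n => c p.1) (t := Finset.univ) (fun p _ => Finset.mem_univ _)]
      refine Finset.sum_congr rfl fun i _ => ?_
      have : T.filter (fun p => c p.1 = i)
          = ((Finset.univ : Finset (Fin n)).filter fun a => c a = i).offDiag := by
        ext p
        simp only [hTdef, Finset.mem_filter, Finset.mem_offDiag, Finset.mem_univ, true_and]
        constructor
        · rintro ⟨⟨hne, hcc⟩, hi⟩
          exact ⟨hi, by rw [← hcc]; exact hi, hne⟩
        · rintro ⟨h1, h2, hne⟩
          exact ⟨⟨hne, by rw [h1, h2]⟩, h1⟩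
      rw [this, Finset.offDiag_card]
    have hsum : ∑ i : Fin ℓ, ((Finset.univ : Finset (Fin n)).filter fun a => c a = i).card = n := by
      rw [← Finset.card_eq_sum_card_fiberwise (f := c) (t := Finset.univ) (fun a _ => Finset.mem_univ _)]
      rw [Finset.card_univ, Fintype.card_fin]
    calc T.card * ℓ = (∑ i : Fin ℓ,
          (((Finset.univ : Finset (Fin n)).filter fun a => c a = i).card *
            ((Finset.univ : Finset (Fin n)).filter fun a => c a = i).card
            - ((Finset.univ : Finset (Fin n)).filter fun a => c a = i).card)) * ℓ := by rw [hD]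
      _ = ∑ i : Fin ℓ,
          (((Finset.univ : Finset (Fin n)).filter fun a => c a = i).card *
            ((Finset.univ : Finset (Fin n)).filter fun a => c a = i).card
            - ((Finset.univ : Finset (Fin n)).filter fun a => c a = i).card) * ℓ :=
        Finset.sum_mul _ _ _
      _ ≤ ∑ i : Fin ℓ, ((Finset.univ : Finset (Fin n)).filter fun a => c a = i).card * (n - 1) := by
        refine Finset.sum_le_sum fun i _ => ?_
        set s := ((Finset.univ : Finset (Fin n)).filter fun a => c a = i).card with hsdef
        have h1 : s * s - s = s * (s - 1) := by rw [Nat.mul_sub_one, Nat.mul_comm]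
        rw [h1, Nat.mul_assoc]
        exact Nat.mul_le_mul_left s (hs i)
      _ = (∑ i : Fin ℓ, ((Finset.univ : Finset (Fin n)).filter fun a => c a = i).card) * (n - 1) :=
        (Finset.sum_mul _ _ _).symm
      _ = n * (n - 1) := by rw [hsum]
      _ = n * n - n := Nat.mul_sub_one n n
  -- combine
  rw [hcol, htot]
  calc T.card * N₀ * ℓ = T.card * ℓ * N₀ := by ring
    _ ≤ (n * n - n) * N₀ := Nat.mul_le_mul_right N₀ hT

private lemma exists_good_tuple {n ℓ k t : ℕ} (c : Fin n → Fin ℓ)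
    (hC : ∀ x y : Fin n, x ≠ y →
      ((Finset.univ : Finset (Equiv.Perm (Fin n))).filter fun σ => c (σ x) = c (σ y)).card * ℓ
        ≤ Fintype.card (Equiv.Perm (Fin n)))
    (hnum : n ^ k * (k ^ 2) ^ t < ℓ ^ t) :
    ∃ g : Fin t → Equiv.Perm (Fin n), ∀ S : Finset (Fin n), S.card = k →
      ∃ j, ∀ x ∈ S, ∀ y ∈ S, x ≠ y → c (g j x) ≠ c (g j y) := by
  classical
  by_contra hcon
  push_neg at hcon
  set M := Fintype.card (Equiv.Perm (Fin n)) with hM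
  set Bad : Finset (Fin n) → Finset (Equiv.Perm (Fin n)) :=
    fun S => Finset.univ.filter fun σ => ∃ x ∈ S, ∃ y ∈ S, x ≠ y ∧ c (σ x) = c (σ y) with hBadDef
  have hsub : (Finset.univ : Finset (Fin t → Equiv.Perm (Fin n))) ⊆
      (Finset.powersetCard k (Finset.univ : Finset (Fin n))).biUnion
        (fun S => Fintype.piFinset fun _ : Fin t => Bad S) := by
    intro g _
    obtain ⟨S, hSk, hSb⟩ := hcon g
    refine Finset.mem_biUnion.mpr ⟨S, Finset.mem_powersetCard.mpr ⟨Finset.subset_univ S, hSk⟩, ?_⟩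
    refine Fintype.mem_piFinset.mpr fun j => ?_
    obtain ⟨x, hx, y, hy, hxy, hcc⟩ := hSb j
    exact Finset.mem_filter.mpr ⟨Finset.mem_univ _, x, hx, y, hy, hxy, hcc⟩
  have hcard1 : M ^ t ≤ ∑ S ∈ Finset.powersetCard k (Finset.univ : Finset (Fin n)),
      (Bad S).card ^ t := by
    calc M ^ t = (Finset.univ : Finset (Fin t → Equiv.Perm (Fin n))).card := by
          rw [Finset.card_univ, Fintype.card_fun, Fintype.card_fin]
      _ ≤ _ := Finset.card_le_card hsub
      _ ≤ ∑ S ∈ Finset.powersetCard k (Finset.univ : Finset (Fin n)),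
            (Fintype.piFinset fun _ : Fin t => Bad S).card := Finset.card_biUnion_le
      _ = ∑ S ∈ Finset.powersetCard k (Finset.univ : Finset (Fin n)), (Bad S).card ^ t := by
          refine Finset.sum_congr rfl fun S _ => ?_
          rw [Fintype.card_piFinset]
          rw [Finset.prod_const, Finset.card_univ, Fintype.card_fin]
  have hBadBound : ∀ S : Finset (Fin n), S.card = k → (Bad S).card * ℓ ≤ (k * k - k) * M := by
    intro S hSk
    have hsub2 : Bad S ⊆ S.offDiag.biUnion
        (fun p => Finset.univ.filter fun σ => c (σ p.1) = c (σ p.2)) := by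
      intro σ hσ
      obtain ⟨-, x, hx, y, hy, hxy, hcc⟩ := Finset.mem_filter.mp hσ
      exact Finset.mem_biUnion.mpr ⟨(x, y), Finset.mem_offDiag.mpr ⟨hx, hy, hxy⟩,
        Finset.mem_filter.mpr ⟨Finset.mem_univ _, hcc⟩⟩
    calc (Bad S).card * ℓ
        ≤ (∑ p ∈ S.offDiag, (Finset.univ.filter
            fun σ : Equiv.Perm (Fin n) => c (σ p.1) = c (σ p.2)).card) * ℓ :=
          Nat.mul_le_mul_right _ ((Finset.card_le_card hsub2).trans Finset.card_biUnion_le)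
      _ = ∑ p ∈ S.offDiag, (Finset.univ.filter
            fun σ : Equiv.Perm (Fin n) => c (σ p.1) = c (σ p.2)).card * ℓ :=
          Finset.sum_mul _ _ _
      _ ≤ ∑ p ∈ S.offDiag, M := Finset.sum_le_sum fun p hp =>
          hC p.1 p.2 (Finset.mem_offDiag.mp hp).2.2
      _ = (k * k - k) * M := by
          rw [Finset.sum_const, smul_eq_mul, Finset.offDiag_card, hSk]
  have hMpos : 0 < M := Fintype.card_pos
  have h2 : M ^ t * ℓ ^ t ≤ n ^ k * ((k * k - k) ^ t * M ^ t) := by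
    calc M ^ t * ℓ ^ t
        ≤ (∑ S ∈ Finset.powersetCard k (Finset.univ : Finset (Fin n)), (Bad S).card ^ t) * ℓ ^ t :=
          Nat.mul_le_mul_right _ hcard1
      _ = ∑ S ∈ Finset.powersetCard k (Finset.univ : Finset (Fin n)), ((Bad S).card * ℓ) ^ t := by
          rw [Finset.sum_mul]
          exact Finset.sum_congr rfl fun S _ => (Nat.mul_pow _ _ _).symm
      _ ≤ ∑ S ∈ Finset.powersetCard k (Finset.univ : Finset (Fin n)), ((k * k - k) * M) ^ t :=
          Finset.sum_le_sum fun S hS =>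
            Nat.pow_le_pow_left (hBadBound S (Finset.mem_powersetCard.mp hS).2) t
      _ = (Finset.powersetCard k (Finset.univ : Finset (Fin n))).card * ((k * k - k) * M) ^ t := by
          rw [Finset.sum_const, smul_eq_mul]
      _ = Nat.choose n k * ((k * k - k) * M) ^ t := by
          rw [Finset.card_powersetCard, Finset.card_univ, Fintype.card_fin]
      _ ≤ n ^ k * ((k * k - k) * M) ^ t := Nat.mul_le_mul_right _ (Nat.choose_le_pow n k)
      _ = n ^ k * ((k * k - k) ^ t * M ^ t) := by rw [Nat.mul_pow]
  have h3 : ℓ ^ t ≤ n ^ k * (k ^ 2) ^ t := by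
    have h4 : ℓ ^ t * M ^ t ≤ (n ^ k * (k ^ 2) ^ t) * M ^ t := by
      calc ℓ ^ t * M ^ t = M ^ t * ℓ ^ t := Nat.mul_comm _ _
        _ ≤ n ^ k * ((k * k - k) ^ t * M ^ t) := h2
        _ ≤ n ^ k * ((k ^ 2) ^ t * M ^ t) := by
            have : (k * k - k) ^ t ≤ (k ^ 2) ^ t :=
              Nat.pow_le_pow_left (by nlinarith [Nat.sub_le (k * k) k]) t
            exact Nat.mul_le_mul_left _ (Nat.mul_le_mul_right _ this)
        _ = (n ^ k * (k ^ 2) ^ t) * M ^ t := by ring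
    exact Nat.le_of_mul_le_mul_right h4 (Nat.pow_pos hMpos)
  exact Nat.lt_irrefl _ (Nat.lt_of_lt_of_le hnum h3)

private lemma logb_two_n_ge_three {n : ℕ} (hn : 8 ≤ n) : (3 : ℝ) ≤ Real.logb 2 n := by
  have h8 : Real.logb 2 (8 : ℝ) = 3 := by
    have h : (8 : ℝ) = 2 ^ (3 : ℕ) := by norm_num
    rw [h, Real.logb_pow, Real.logb_self_eq_one (by norm_num : (1:ℝ) < 2)]
    norm_num
  calc (3 : ℝ) = Real.logb 2 (8 : ℝ) := h8.symm
    _ ≤ Real.logb 2 n := Real.logb_le_logb_of_le (by norm_num) (by norm_num) (by exact_mod_cast hn)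

private lemma logb_two_three : (3 : ℝ) / 2 ≤ Real.logb 2 3 := by
  rw [Real.logb, div_le_div_iff₀ (by norm_num : (0:ℝ) < 2) (Real.log_pos (by norm_num : (1:ℝ) < 2))]
  have h8 : Real.log (8 : ℝ) = 3 * Real.log 2 := by
    have : (8 : ℝ) = 2 ^ (3 : ℕ) := by norm_num
    rw [this, Real.log_pow]; norm_num
  have h9 : Real.log (9 : ℝ) = 2 * Real.log 3 := by
    have : (9 : ℝ) = 3 ^ (2 : ℕ) := by norm_num
    rw [this, Real.log_pow]; norm_num
  have := Real.log_le_log (by norm_num : (0:ℝ) < 8) (by norm_num : (8:ℝ) ≤ 9)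
  nlinarith

private lemma numeric_main {n k ℓ t : ℕ} (hk : 8 ≤ k) (hn : k ≤ n)
    (hℓ : (k : ℝ) ^ 2 * Real.logb 2 n ≤ (ℓ : ℝ))
    (ht : (k : ℝ) ^ 2 * Real.logb 2 n / Real.logb 2 ℓ ≤ (t : ℝ)) :
    n ^ k * (k ^ 2) ^ t < ℓ ^ t := by
  have hn8 : 8 ≤ n := hk.trans hn
  set Lk := Real.logb 2 k with hLk
  set Ln := Real.logb 2 n with hLn
  set Ll := Real.logb 2 ℓ with hLl
  have hkR : (8 : ℝ) ≤ (k : ℝ) := by exact_mod_cast hk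
  have hLn3 : (3 : ℝ) ≤ Ln := logb_two_n_ge_three hn8
  have hl192 : (192 : ℝ) ≤ (ℓ : ℝ) := by nlinarith
  have hl2 : (2 : ℝ) ≤ (ℓ : ℝ) := by linarith
  have hLl1 : (1 : ℝ) ≤ Ll := by
    rw [hLl]
    calc (1:ℝ) = Real.logb 2 2 := (Real.logb_self_eq_one (by norm_num : (1:ℝ) < 2)).symm
      _ ≤ Real.logb 2 ℓ := Real.logb_le_logb_of_le (by norm_num) (by norm_num) hl2
  have hLlpos : (0 : ℝ) < Ll := by linarith
  have hLkk : 2 * Lk ≤ (k : ℝ) := by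
    have h1 : (k : ℝ) ^ 2 ≤ (2 : ℝ) ^ k := by exact_mod_cast sq_le_two_pow (by omega : 4 ≤ k)
    have h2 : Real.logb 2 ((k : ℝ) ^ 2) ≤ Real.logb 2 ((2 : ℝ) ^ k) :=
      Real.logb_le_logb_of_le (by norm_num) (by positivity) h1
    rw [Real.logb_pow, Real.logb_pow, Real.logb_self_eq_one (by norm_num : (1:ℝ) < 2)] at h2
    rw [hLk]; push_cast at h2; linarith
  have hLkpos : (0 : ℝ) < Lk := Real.logb_pos (by norm_num) (by exact_mod_cast (by omega : 1 < k))
  have hLl2 : 2 * Lk + 3 / 2 ≤ Ll := by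
    have hk2Ln : (0 : ℝ) < (k : ℝ) ^ 2 * Ln := by positivity
    have h1 : Real.logb 2 ((k : ℝ) ^ 2 * Ln) ≤ Ll :=
      Real.logb_le_logb_of_le (by norm_num) hk2Ln hℓ
    rw [Real.logb_mul (by positivity) (by linarith), Real.logb_pow] at h1
    have h2 : Real.logb 2 Ln ≥ 3 / 2 := by
      calc Real.logb 2 Ln ≥ Real.logb 2 3 :=
        Real.logb_le_logb_of_le (by norm_num) (by norm_num) hLn3
      _ ≥ 3 / 2 := logb_two_three
    rw [hLk]; push_cast at h1; linarith
  have htA : (k : ℝ) ^ 2 * Ln ≤ (t : ℝ) * Ll := by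
    rw [div_le_iff₀ hLlpos] at ht; exact ht
  -- core inequality : k * Ln + t * (2 * Lk) < t * Ll
  have hcore : (k : ℝ) * Ln + (t : ℝ) * (2 * Lk) < (t : ℝ) * Ll := by
    have hX : (3 : ℝ) / 2 ≤ Ll - 2 * Lk := by linarith
    have hkX : Ll < (k : ℝ) * (Ll - 2 * Lk) := by nlinarith
    have hkLn : (0 : ℝ) < (k : ℝ) * Ln := by positivity
    have h3 : (k : ℝ) * Ln * Ll < ((k : ℝ) ^ 2 * Ln) * (Ll - 2 * Lk) := by nlinarith
    have h4 : ((k : ℝ) ^ 2 * Ln) * (Ll - 2 * Lk) ≤ ((t : ℝ) * Ll) * (Ll - 2 * Lk) :=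
      mul_le_mul_of_nonneg_right htA (by linarith)
    have h5 : (k : ℝ) * Ln * Ll < ((t : ℝ) * (Ll - 2 * Lk)) * Ll := by nlinarith
    have h6 : (k : ℝ) * Ln < (t : ℝ) * (Ll - 2 * Lk) := lt_of_mul_lt_mul_right h5 (le_of_lt hLlpos)
    nlinarith
  -- convert to the real inequality on powers
  have hR : (n : ℝ) ^ k * ((k : ℝ) ^ 2) ^ t < (ℓ : ℝ) ^ t := by
    have hposL : (0 : ℝ) < (n : ℝ) ^ k * ((k : ℝ) ^ 2) ^ t := by positivity
    have hposR : (0 : ℝ) < (ℓ : ℝ) ^ t := by positivity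
    rw [← Real.logb_lt_logb_iff (b := 2) (by norm_num) hposL hposR]
    rw [Real.logb_mul (by positivity) (by positivity), Real.logb_pow, Real.logb_pow,
      Real.logb_pow, Real.logb_pow]
    push_cast
    linarith [hcore]
  exact_mod_cast hR

end SplitterAux

/-- For `k ≥ 8`, `n ≥ k` and `ℓ ≥ k²·log n` there is a uniform `(n,k,ℓ)`-splitter of
size at most `⌈k²·log n / log ℓ⌉`. -/
theorem uniform_splitter_large_ell (n k ℓ : ℕ) (hk : 8 ≤ k) (hn : k ≤ n)
    (hℓ : (k : ℝ) ^ 2 * Real.logb 2 n ≤ (ℓ : ℝ)) :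
    ∃ F : Finset (Fin n → Fin ℓ),
      IsSplitter n k ℓ F ∧ IsUniformFamily n ℓ F ∧
        F.card ≤ ⌈(k : ℝ) ^ 2 * Real.logb 2 n / Real.logb 2 ℓ⌉₊ := by
  classical
  have hn8 : 8 ≤ n := hk.trans hn
  have hkR : (8 : ℝ) ≤ (k : ℝ) := by exact_mod_cast hk
  have hLn3 : (3 : ℝ) ≤ Real.logb 2 n := logb_two_n_ge_three hn8
  have hl192R : (192 : ℝ) ≤ (ℓ : ℝ) := by nlinarith
  have hl192 : 192 ≤ ℓ := by exact_mod_cast hl192R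
  have hℓ0 : 0 < ℓ := by omega
  have hkl : k < ℓ := by
    have : (k : ℝ) < (ℓ : ℝ) := by nlinarith
    exact_mod_cast this
  have hLlpos : (0 : ℝ) < Real.logb 2 ℓ :=
    Real.logb_pos (by norm_num) (by exact_mod_cast (by omega : 1 < ℓ))
  have hLnpos : (0 : ℝ) < Real.logb 2 n := by linarith
  -- lower splitter bound is 0 and upper bound is at least 1
  have hklow : k / ℓ = 0 := Nat.div_eq_of_lt hkl
  have hkup : 1 ≤ (k + ℓ - 1) / ℓ := (Nat.one_le_div_iff hℓ0).mpr (by omega)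
  by_cases hcase : n ≤ ℓ
  · -- single injective function
    set f : Fin n → Fin ℓ := Fin.castLE hcase with hf
    have hfinj : Function.Injective f := Fin.castLE_injective hcase
    refine ⟨{f}, ?_, ?_, ?_⟩
    · intro S hS
      refine ⟨f, Finset.mem_singleton_self f, fun i => ?_⟩
      constructor
      · rw [hklow]; exact Nat.zero_le _
      · refine le_trans ?_ hkup
        apply Finset.card_le_one.mpr
        intro a ha b hb
        exact hfinj ((Finset.mem_filter.mp ha).2.trans (Finset.mem_filter.mp hb).2.symm)
    · intro g hg i hi
      have hgf : g = f := Finset.mem_singleton.mp hg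
      subst hgf
      have him : imageSize f = n := by
        rw [imageSize, Finset.card_image_of_injective _ hfinj, Finset.card_univ, Fintype.card_fin]
      obtain ⟨x₀, -, hx₀⟩ := Finset.mem_image.mp hi
      have hpre : preimCard f i = 1 := by
        rw [preimCard]
        rw [Finset.card_eq_one]
        refine ⟨x₀, ?_⟩
        ext a
        simp only [Finset.mem_filter, Finset.mem_univ, true_and, Finset.mem_singleton]
        constructor
        · intro h; exact hfinj (h.trans hx₀.symm)
        · intro h; rw [h, hx₀]
      rw [him, hpre]
      have hn0 : 0 < n := by omega
      constructor
      · exact le_of_eq (Nat.div_self hn0)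
      · have : (n + n - 1) / n = 1 := by
          apply Nat.div_eq_of_lt_le <;> omega
        omega
    · rw [Finset.card_singleton]
      refine Nat.one_le_ceil_iff.mpr ?_
      positivity
  · -- main construction
    push_neg at hcase
    have hℓn : ℓ ≤ n := le_of_lt hcase
    set c : Fin n → Fin ℓ := fun x => ⟨x.1 % ℓ, Nat.mod_lt _ hℓ0⟩ with hc
    -- fiber counts of c
    have hfiber : ∀ i : Fin ℓ,
        ((Finset.univ : Finset (Fin n)).filter fun x => c x = i).card = (n - i.1 - 1) / ℓ + 1 := by
      intro i
      have hpred : ∀ x : Fin n, (c x = i) = (x.1 % ℓ = i.1) := by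
        intro x
        apply propext
        constructor
        · intro h; exact congrArg Fin.val h
        · intro h; exact Fin.ext h
      calc ((Finset.univ : Finset (Fin n)).filter fun x => c x = i).card
          = ((Finset.univ : Finset (Fin n)).filter fun x => x.1 % ℓ = i.1).card := by
            congr 1; apply Finset.filter_congr; intro x _; rw [hpred]
        _ = ((Finset.range n).filter fun x => x % ℓ = i.1).card := card_filter_fin_val (fun m => m % ℓ = i.1)
        _ = (n - i.1 - 1) / ℓ + 1 := filter_mod_card hℓ0 hℓn i.2
    have hfb : ∀ i : Fin ℓ,
        n / ℓ ≤ ((Finset.univ : Finset (Fin n)).filter fun x => c x = i).card ∧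
        ((Finset.univ : Finset (Fin n)).filter fun x => c x = i).card ≤ (n + ℓ - 1) / ℓ := by
      intro i
      rw [hfiber i]
      exact mod_count_bounds hℓ0 hℓn i.2
    -- hypothesis for collision_bound
    have hs : ∀ i : Fin ℓ,
        (((Finset.univ : Finset (Fin n)).filter fun x => c x = i).card - 1) * ℓ ≤ n - 1 := by
      intro i
      rw [hfiber i]
      simp only [Nat.add_sub_cancel]
      have h1 : (n - i.1 - 1) / ℓ ≤ (n - 1) / ℓ := Nat.div_le_div_right (by omega)
      calc (n - i.1 - 1) / ℓ * ℓ ≤ (n - 1) / ℓ * ℓ := Nat.mul_le_mul_right _ h1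
        _ ≤ n - 1 := Nat.div_mul_le_self _ _
    -- the number of functions
    set t : ℕ := ⌈(k : ℝ) ^ 2 * Real.logb 2 n / Real.logb 2 ℓ⌉₊ with htdef
    have hnum : n ^ k * (k ^ 2) ^ t < ℓ ^ t :=
      numeric_main hk hn hℓ (Nat.le_ceil _)
    obtain ⟨g, hg⟩ := exists_good_tuple c (fun x y hxy => collision_bound c hs hxy) hnum
    set F : Finset (Fin n → Fin ℓ) :=
      (Finset.univ : Finset (Fin t)).image (fun j => fun x => c (g j x)) with hF
    have hmem : ∀ f ∈ F, ∃ j : Fin t, f = fun x => c (g j x) := by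
      intro f hf
      obtain ⟨j, -, hj⟩ := Finset.mem_image.mp hf
      exact ⟨j, hj.symm⟩
    -- facts about c ∘ σ
    have hpre : ∀ (σ : Equiv.Perm (Fin n)) (i : Fin ℓ),
        ((Finset.univ : Finset (Fin n)).filter fun x => c (σ x) = i).card
          = ((Finset.univ : Finset (Fin n)).filter fun x => c x = i).card := by
      intro σ i
      apply Finset.card_bij (fun x _ => σ x)
      · intro a ha
        exact Finset.mem_filter.mpr ⟨Finset.mem_univ _, (Finset.mem_filter.mp ha).2⟩
      · intro a _ b _ h
        exact σ.injective h
      · intro b hb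
        refine ⟨σ⁻¹ b, Finset.mem_filter.mpr ⟨Finset.mem_univ _, ?_⟩, ?_⟩
        · rw [← Equiv.Perm.mul_apply, mul_inv_cancel, Equiv.Perm.one_apply]
          exact (Finset.mem_filter.mp hb).2
        · rw [← Equiv.Perm.mul_apply, mul_inv_cancel, Equiv.Perm.one_apply]
    have hcsurj : ∀ i : Fin ℓ, ∃ x : Fin n, c x = i := by
      intro i
      refine ⟨⟨i.1, lt_of_lt_of_le i.2 hℓn⟩, ?_⟩
      apply Fin.ext
      exact Nat.mod_eq_of_lt i.2
    have him : ∀ σ : Equiv.Perm (Fin n),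
        imageSize (fun x => c (σ x)) = ℓ := by
      intro σ
      rw [imageSize]
      have : (Finset.univ.image fun x => c (σ x)) = (Finset.univ : Finset (Fin ℓ)) := by
        apply Finset.eq_univ_of_forall
        intro i
        obtain ⟨x, hx⟩ := hcsurj i
        exact Finset.mem_image.mpr ⟨σ⁻¹ x, Finset.mem_univ _, by rw [← Equiv.Perm.mul_apply, mul_inv_cancel, Equiv.Perm.one_apply, hx]⟩
      rw [this, Finset.card_univ, Fintype.card_fin]
    refine ⟨F, ?_, ?_, ?_⟩
    · -- splitter
      intro S hS
      obtain ⟨j, hj⟩ := hg S hS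
      refine ⟨fun x => c (g j x), Finset.mem_image.mpr ⟨j, Finset.mem_univ _, rfl⟩, fun i => ?_⟩
      constructor
      · rw [hklow]; exact Nat.zero_le _
      · refine le_trans ?_ hkup
        apply Finset.card_le_one.mpr
        intro a ha b hb
        obtain ⟨haS, hac⟩ := Finset.mem_filter.mp ha
        obtain ⟨hbS, hbc⟩ := Finset.mem_filter.mp hb
        by_contra hab
        exact hj a haS b hbS hab (hac.trans hbc.symm)
    · -- uniform
      intro f hf i hi
      obtain ⟨j, rfl⟩ := hmem f hf
      rw [preimCard, him (g j), hpre (g j) i]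
      exact hfb i
    · -- cardinality
      calc F.card ≤ (Finset.univ : Finset (Fin t)).card := Finset.card_image_le
        _ = t := by rw [Finset.card_univ, Fintype.card_fin]
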